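/- Let S₀ be the 8×8 diagonal matrix diag(p_ρ/ρ², 1, 1, 1, e_θ/θ, τ/(κρθ), τ/(κρθ), τ/(κρθ)) with all parameters p_ρ, ρ, e_θ, θ, τ, κ > 0. Then S₀ is symmetric positive definite, and for every ξ ∈ ℝ³, S₀·A₀(ξ) is symmetric, where A₀(ξ) is the symbol of the Cattaneo-Christov-Jordan system with coefficients α = p_ρ/ρ, η = p_θ/ρ, β = θp_θ/(ρe_θ), γ = 1/(ρe_θ), δ = κ/τ. -/
import Mathlib


open Finset Matrix

/-- The Friedrichs symmetrizer `S₀` of the Cattaneo-Christov-Jordan system. -/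
noncomputable def S0mat (pρ eθ κ ρ θ τ : ℝ) : Matrix (Fin 8) (Fin 8) ℝ :=
  Matrix.diagonal ![pρ / ρ ^ 2, 1, 1, 1, eθ / θ, τ / (κ * ρ * θ), τ / (κ * ρ * θ), τ / (κ * ρ * θ)]

/-- The symbol `A₀(ξ)` of the Cattaneo-Christov-Jordan system. -/
noncomputable def A0ccj (pρ pθ eθ κ ρ θ τ : ℝ) (v ξ : Fin 3 → ℝ) : Matrix (Fin 8) (Fin 8) ℝ :=
  let w : ℝ := ∑ i, v i * ξ i
  let α := pρ / ρ; let η := pθ / ρ; let β := θ * pθ / (ρ * eθ)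
  let γ := 1 / (ρ * eθ); let δ := κ / τ
  !![w,        ρ * ξ 0,  ρ * ξ 1,  ρ * ξ 2,  0,        0, 0, 0;
     α * ξ 0,  w,        0,        0,        η * ξ 0,  0, 0, 0;
     α * ξ 1,  0,        w,        0,        η * ξ 1,  0, 0, 0;
     α * ξ 2,  0,        0,        w,        η * ξ 2,  0, 0, 0;
     0,        β * ξ 0,  β * ξ 1,  β * ξ 2,  w,        γ * ξ 0, γ * ξ 1, γ * ξ 2;
     0,        0,        0,        0,        δ * ξ 0,  w, 0, 0;
     0,        0,        0,        0,        δ * ξ 1,  0, w, 0;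
     0,        0,        0,        0,        δ * ξ 2,  0, 0, w]

set_option maxHeartbeats 2000000 in
theorem stmt_16 (pρ pθ eθ κ ρ θ τ : ℝ)
    (hpρ : 0 < pρ) (hpθ : 0 < pθ) (heθ : 0 < eθ) (hκ : 0 < κ)
    (hρ : 0 < ρ) (hθ : 0 < θ) (hτ : 0 < τ) (v : Fin 3 → ℝ) :
    (S0mat pρ eθ κ ρ θ τ).IsSymm ∧ (S0mat pρ eθ κ ρ θ τ).PosDef ∧
    ∀ ξ : Fin 3 → ℝ, (S0mat pρ eθ κ ρ θ τ * A0ccj pρ pθ eθ κ ρ θ τ v ξ).IsSymm := by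
  refine ⟨Matrix.isSymm_diagonal _, ?_, ?_⟩
  · rw [S0mat, Matrix.posDef_diagonal_iff]
    intro i
    fin_cases i <;> norm_num [Matrix.cons_val_succ'] <;> positivity
  · intro ξ
    rw [Matrix.IsSymm]
    ext i j
    rw [Matrix.transpose_apply]
    simp only [S0mat, Matrix.diagonal_mul, Matrix.of_apply]
    fin_cases i <;> fin_cases j <;>
      norm_num [A0ccj, Matrix.cons_val_succ'] <;> field_simp <;> ring
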